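/- (Hensel lifting, uniqueness.) Let F be a field, α ∈ F, m ≥ 1 an integer, and P, g, h, a, b ∈ F[X,Y] such that (X−α)^m divides P − g·h and (X−α)^m divides a·g + b·h − 1. Suppose g', h' ∈ F[X,Y] satisfy (X−α)^{2m} | P − g'·h', (X−α)^m | g' − g, and (X−α)^m | h' − h, and suppose g*, h* ∈ F[X,Y] also satisfy (X−α)^{2m} | P − g*·h*, (X−α)^m | g* − g, and (X−α)^m | h* − h. Then there exists u ∈ F[X,Y] with (X−α)^m | u such that (X−α)^{2m} divides g* − g'·(1+u) and (X−α)^{2m} divides h* − h'·(1−u). -/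

import Mathlib

/-!
STATEMENT 7 (Hensel lifting, uniqueness): Let F be a field, α ∈ F, m ≥ 1 an integer, and
P, g, h, a, b ∈ F[X,Y] such that (X−α)^m divides P − g·h and (X−α)^m divides a·g + b·h − 1.
Suppose g', h' ∈ F[X,Y] satisfy (X−α)^{2m} | P − g'·h', (X−α)^m | g' − g, and
(X−α)^m | h' − h, and suppose g*, h* ∈ F[X,Y] also satisfy (X−α)^{2m} | P − g*·h*,
(X−α)^m | g* − g, and (X−α)^m | h* − h. Then there exists u ∈ F[X,Y] with (X−α)^m | u
such that (X−α)^{2m} divides g* − g'·(1+u) and (X−α)^{2m} divides h* − h'·(1−u).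

Bivariate polynomials in F[X,Y] are represented as `Polynomial (Polynomial F)` with outer
variable Y and inner variable X; the polynomial (X−α) ∈ F[X,Y] is
`Polynomial.C (Polynomial.X - Polynomial.C α)`.
-/

theorem statement7 (F : Type*) [Field F] (α : F) (m : ℕ) (hm : 1 ≤ m)
    (P g h a b g' h' gs hs : Polynomial (Polynomial F))
    (hfac : (Polynomial.C (Polynomial.X - Polynomial.C α)) ^ m ∣ (P - g * h))
    (hbez : (Polynomial.C (Polynomial.X - Polynomial.C α)) ^ m ∣ (a * g + b * h - 1))
    (hfac' : (Polynomial.C (Polynomial.X - Polynomial.C α)) ^ (2 * m) ∣ (P - g' * h'))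
    (hg' : (Polynomial.C (Polynomial.X - Polynomial.C α)) ^ m ∣ (g' - g))
    (hh' : (Polynomial.C (Polynomial.X - Polynomial.C α)) ^ m ∣ (h' - h))
    (hfacs : (Polynomial.C (Polynomial.X - Polynomial.C α)) ^ (2 * m) ∣ (P - gs * hs))
    (hgs : (Polynomial.C (Polynomial.X - Polynomial.C α)) ^ m ∣ (gs - g))
    (hhs : (Polynomial.C (Polynomial.X - Polynomial.C α)) ^ m ∣ (hs - h)) :
    ∃ u : Polynomial (Polynomial F),
      (Polynomial.C (Polynomial.X - Polynomial.C α)) ^ m ∣ u ∧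
      (Polynomial.C (Polynomial.X - Polynomial.C α)) ^ (2 * m) ∣ (gs - g' * (1 + u)) ∧
      (Polynomial.C (Polynomial.X - Polynomial.C α)) ^ (2 * m) ∣ (hs - h' * (1 - u)) := by
  set π : Polynomial (Polynomial F) := Polynomial.C (Polynomial.X - Polynomial.C α) with hπ
  have hΔg : π ^ m ∣ gs - g' := by
    have h1 := dvd_sub hgs hg'
    have h2 : gs - g - (g' - g) = gs - g' := by ring
    rwa [h2] at h1
  have hΔh : π ^ m ∣ hs - h' := by
    have h1 := dvd_sub hhs hh'
    have h2 : hs - h - (h' - h) = hs - h' := by ring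
    rwa [h2] at h1
  have h2m : π ^ (2 * m) ∣ gs * hs - g' * h' := by
    have h1 := dvd_sub hfac' hfacs
    have h2 : P - g' * h' - (P - gs * hs) = gs * hs - g' * h' := by ring
    rwa [h2] at h1
  have hprod : π ^ (2 * m) ∣ (gs - g') * (hs - h') := by
    rw [two_mul, pow_add]; exact mul_dvd_mul hΔg hΔh
  have hkey : π ^ (2 * m) ∣ g' * (hs - h') + h' * (gs - g') := by
    have h2 : g' * (hs - h') + h' * (gs - g')
        = (gs * hs - g' * h') - (gs - g') * (hs - h') := by ring
    rw [h2]; exact dvd_sub h2m hprod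
  have hbez' : π ^ m ∣ a * g' + b * h' - 1 := by
    have h2 : a * g' + b * h' - 1
        = (a * g + b * h - 1) + a * (g' - g) + b * (h' - h) := by ring
    rw [h2]
    exact dvd_add (dvd_add hbez (hg'.mul_left a)) (hh'.mul_left b)
  refine ⟨a * (gs - g') - b * (hs - h'),
    dvd_sub (hΔg.mul_left a) (hΔh.mul_left b), ?_, ?_⟩
  · have h2 : gs - g' * (1 + (a * (gs - g') - b * (hs - h')))
        = -((gs - g') * (a * g' + b * h' - 1))
          + b * (g' * (hs - h') + h' * (gs - g')) := by ring
    rw [h2]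
    refine dvd_add ((dvd_neg (α := Polynomial (Polynomial F))).mpr ?_) (hkey.mul_left b)
    rw [two_mul, pow_add]; exact mul_dvd_mul hΔg hbez'
  · have h2 : hs - h' * (1 - (a * (gs - g') - b * (hs - h')))
        = -((hs - h') * (a * g' + b * h' - 1))
          + a * (g' * (hs - h') + h' * (gs - g')) := by ring
    rw [h2]
    refine dvd_add ((dvd_neg (α := Polynomial (Polynomial F))).mpr ?_) (hkey.mul_left a)
    rw [two_mul, pow_add]; exact mul_dvd_mul hΔh hbez'
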